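/- Let v_1, ..., v_n be vectors in a 2-dimensional complex inner product space W with ∑_{i,j} |⟨v_i, v_j⟩|² = (1/2)·(∑_i ‖v_i‖²)². Then for every i, the rank-one operator A_i(x) = ⟨x, v_i⟩ v_i commutes with the frame operator S(x) = ∑_j ⟨x, v_j⟩ v_j. -/
import Mathlib

open scoped InnerProductSpace BigOperators

/-- Equality in the Welch bound in a 2-dimensional space forces the frame operator to
commute with each rank-one operator `Aᵢ : x ↦ ⟨x, vᵢ⟩ vᵢ`. -/
theorem rank_one_commutes_of_welch_equality {W : Type*} [NormedAddCommGroup W]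
    [InnerProductSpace ℂ W] [FiniteDimensional ℂ W]
    (hW : Module.finrank ℂ W = 2) (n : ℕ) (v : Fin n → W)
    (heq : ∑ i, ∑ j, ‖(⟪v i, v j⟫_ℂ)‖ ^ 2 = (1 / 2 : ℝ) * (∑ i, ‖v i‖ ^ 2) ^ 2)
    (i : Fin n) :
    ∀ x : W,
      ⟪v i, (∑ j, ⟪v j, x⟫_ℂ • v j)⟫_ℂ • v i =
        ∑ j, ⟪v j, (⟪v i, x⟫_ℂ • v i)⟫_ℂ • v j := by
  obtain ⟨e⟩ : Nonempty (OrthonormalBasis (Fin 2) ℂ W) :=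
    ⟨(stdOrthonormalBasis ℂ W).reindex (finCongr hW)⟩
  set M : Fin 2 → Fin 2 → ℂ := fun k l => ∑ j, ⟪v j, e l⟫_ℂ * ⟪e k, v j⟫_ℂ with hM
  have hconj : ∀ k l, (starRingEnd ℂ) (M k l) = M l k := by
    intro k l
    rw [hM, map_sum]
    refine Finset.sum_congr rfl fun j _ => ?_
    rw [map_mul, inner_conj_symm, inner_conj_symm, mul_comm]
  set a : ℝ := ∑ j, ‖⟪e 0, v j⟫_ℂ‖ ^ 2 with ha
  set d : ℝ := ∑ j, ‖⟪e 1, v j⟫_ℂ‖ ^ 2 with hd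
  set b : ℂ := M 0 1 with hb
  have hdiag : ∀ k, M k k = ((∑ j, ‖⟪e k, v j⟫_ℂ‖ ^ 2 : ℝ) : ℂ) := by
    intro k
    rw [hM]
    push_cast
    refine Finset.sum_congr rfl fun j _ => ?_
    rw [← inner_conj_symm (e k) (v j), Complex.mul_conj', RCLike.norm_conj]
  have hA : ((∑ i, ∑ j, ‖(⟪v i, v j⟫_ℂ)‖ ^ 2 : ℝ) : ℂ) = ∑ k, ∑ l, M l k * M k l := by
    push_cast
    calc ∑ i, ∑ j, ((‖(⟪v i, v j⟫_ℂ)‖ : ℂ)) ^ 2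
        = ∑ i, ∑ j, ⟪v i, v j⟫_ℂ * ⟪v j, v i⟫_ℂ := by
          refine Finset.sum_congr rfl fun p _ => Finset.sum_congr rfl fun q _ => ?_
          rw [← inner_conj_symm (v p) (v q), RCLike.norm_conj, mul_comm, Complex.mul_conj']
      _ = ∑ i, ∑ j, (∑ k, ⟪v i, e k⟫_ℂ * ⟪e k, v j⟫_ℂ) *
            (∑ l, ⟪v j, e l⟫_ℂ * ⟪e l, v i⟫_ℂ) := by
          simp_rw [e.sum_inner_mul_inner]
      _ = ∑ k, ∑ l, M l k * M k l := by
          simp only [hM, Fin.sum_univ_two, Finset.sum_mul_sum, Finset.mul_sum,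
            Finset.sum_mul, ← Finset.sum_add_distrib]
          refine Finset.sum_congr rfl fun p _ => Finset.sum_congr rfl fun q _ => ?_
          ring
  have hB : ((∑ i, ‖v i‖ ^ 2 : ℝ) : ℂ) = M 0 0 + M 1 1 := by
    rw [hM]
    push_cast
    rw [← Finset.sum_add_distrib]
    refine Finset.sum_congr rfl fun j _ => ?_
    have h2 := e.sum_inner_mul_inner (v j) (v j)
    rw [Fin.sum_univ_two] at h2
    rw [h2, inner_self_eq_norm_sq_to_K]
    norm_cast
  have heqC : ∑ k, ∑ l, M l k * M k l = (1 / 2 : ℂ) * (M 0 0 + M 1 1) ^ 2 := by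
    rw [← hA, ← hB, heq]
    push_cast
    ring
  have hM10 : M 1 0 = (starRingEnd ℂ) b := by rw [hb, hconj]
  have hkey : (a ^ 2 + d ^ 2 + 2 * ‖b‖ ^ 2 : ℝ) = (1 / 2) * (a + d) ^ 2 := by
    have h3 := heqC
    simp only [Fin.sum_univ_two] at h3
    rw [hdiag 0, hdiag 1, hM10, ← ha, ← hd, ← hb] at h3
    rw [Complex.mul_conj', mul_comm ((starRingEnd ℂ) b) b, Complex.mul_conj'] at h3
    have h4 : ((a ^ 2 + d ^ 2 + 2 * ‖b‖ ^ 2 : ℝ) : ℂ) = (((1 / 2) * (a + d) ^ 2 : ℝ) : ℂ) := by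
      push_cast
      linear_combination h3
    exact_mod_cast h4
  have hbz : b = 0 := by
    have h5 : ‖b‖ ^ 2 = 0 := by nlinarith [sq_nonneg (a - d), sq_nonneg ‖b‖]
    have := pow_eq_zero_iff (n := 2) (by norm_num) |>.mp h5
    exact norm_eq_zero.mp this
  have had : a = d := by nlinarith [hbz, sq_nonneg (a - d)]
  have hink : ∀ (k k' : Fin 2), ⟪e k', ∑ j, ⟪v j, e k⟫_ℂ • v j⟫_ℂ = M k' k := by
    intro k k'
    rw [hM]
    simp [inner_sum, inner_smul_right]
  have hSe0 : ∑ j, ⟪v j, e 0⟫_ℂ • v j = (a : ℂ) • e 0 := by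
    have hx := e.sum_repr' (∑ j, ⟪v j, e 0⟫_ℂ • v j)
    rw [← hx, Fin.sum_univ_two, hink 0 0, hink 0 1, hdiag 0, ← ha, hM10, hbz]
    simp
  have hSe1 : ∑ j, ⟪v j, e 1⟫_ℂ • v j = (a : ℂ) • e 1 := by
    have hx := e.sum_repr' (∑ j, ⟪v j, e 1⟫_ℂ • v j)
    rw [← hx, Fin.sum_univ_two, hink 1 0, hink 1 1, hdiag 1, ← hd, ← hb, hbz, ← had]
    simp
  have hSe : ∀ k : Fin 2, ∑ j, ⟪v j, e k⟫_ℂ • v j = (a : ℂ) • e k := by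
    intro k
    fin_cases k
    · simpa using hSe0
    · simpa using hSe1
  have hS : ∀ y : W, ∑ j, ⟪v j, y⟫_ℂ • v j = (a : ℂ) • y := by
    intro y
    calc ∑ j, ⟪v j, y⟫_ℂ • v j
        = ∑ j, ∑ k, (⟪e k, y⟫_ℂ * ⟪v j, e k⟫_ℂ) • v j := by
          refine Finset.sum_congr rfl fun j _ => ?_
          conv_lhs => rw [← e.sum_repr' y]
          rw [inner_sum, Finset.sum_smul]
          simp [inner_smul_right]
      _ = ∑ k, ⟪e k, y⟫_ℂ • (∑ j, ⟪v j, e k⟫_ℂ • v j) := by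
          rw [Finset.sum_comm]
          simp [Finset.smul_sum, mul_smul]
      _ = ∑ k, ⟪e k, y⟫_ℂ • ((a : ℂ) • e k) := by simp_rw [hSe]
      _ = (a : ℂ) • y := by
          simp_rw [smul_comm _ ((a : ℂ) : ℂ)]
          rw [← Finset.smul_sum, e.sum_repr' y]
  intro x
  rw [hS x, hS (⟪v i, x⟫_ℂ • v i), inner_smul_right, mul_smul]
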